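/- Assume f₊₊ and f₋₋ are symmetric and f₊₋ is the transpose of f₋₊. Then the Ricci contraction of the tensor R_{abcd} satisfies, for all a,b ∈ {1,2,3,4}, Σ_{c=1}^{4} R_{acbc} = (trace(f₊₊) + trace(f₋₋)) δ_{ab} + 2 Σ_{i,j=1}^{3} f₊₋^{ij} Σ_{c=1}^{4} η^i_{ac} η̄^j_{bc}, and consequently the full contraction satisfies Σ_{a,c=1}^{4} R_{acac} = 4 (trace(f₊₊) + trace(f₋₋)). -/

import Mathlib

noncomputable section

open Matrix

/-- Three-index Levi-Civita symbol on `Fin 3` (ε₁₂₃ = 1, zero-indexed as ε₀₁₂ = 1). -/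
def eps3 (i j k : Fin 3) : ℝ :=
  ((j : ℝ) - (i : ℝ)) * ((k : ℝ) - (i : ℝ)) * ((k : ℝ) - (j : ℝ)) / 2

/-- Four-index Levi-Civita symbol on `Fin 4` (ε₁₂₃₄ = 1, zero-indexed as ε₀₁₂₃ = 1). -/
def eps4 (a b c d : Fin 4) : ℝ :=
  ((b : ℝ) - (a : ℝ)) * ((c : ℝ) - (a : ℝ)) * ((d : ℝ) - (a : ℝ)) *
    ((c : ℝ) - (b : ℝ)) * ((d : ℝ) - (b : ℝ)) * ((d : ℝ) - (c : ℝ)) / 12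

/-- 't Hooft symbol η^i_{ab}: η^i_{jk} = ε_{ijk}, η^i_{j4} = δ_{ij}, η^i_{4j} = -δ_{ij},
η^i_{44} = 0 (the index `4` of the paper is the index `3 : Fin 4` here). -/
def tHooft (i : Fin 3) (a b : Fin 4) : ℝ :=
  if ha : (a : ℕ) < 3 then
    if hb : (b : ℕ) < 3 then eps3 i ⟨a, ha⟩ ⟨b, hb⟩
    else if (a : ℕ) = (i : ℕ) then 1 else 0
  else
    if (b : ℕ) < 3 then (if (b : ℕ) = (i : ℕ) then -1 else 0)
    else 0

/-- 't Hooft symbol η̄^i_{ab}: η̄^i_{jk} = ε_{ijk}, η̄^i_{j4} = -δ_{ij}, η̄^i_{4j} = δ_{ij},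
η̄^i_{44} = 0. -/
def tHooftBar (i : Fin 3) (a b : Fin 4) : ℝ :=
  if ha : (a : ℕ) < 3 then
    if hb : (b : ℕ) < 3 then eps3 i ⟨a, ha⟩ ⟨b, hb⟩
    else if (a : ℕ) = (i : ℕ) then -1 else 0
  else
    if (b : ℕ) < 3 then (if (b : ℕ) = (i : ℕ) then 1 else 0)
    else 0

/-- The curvature-type tensor built from 3×3 matrices f₊₊, f₊₋, f₋₊, f₋₋ via the
't Hooft symbols. -/
def Riem (fpp fpm fmp fmm : Matrix (Fin 3) (Fin 3) ℝ) (a b c d : Fin 4) : ℝ :=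
  ∑ i : Fin 3, ∑ j : Fin 3,
    (fpp i j * tHooft i a b * tHooft j c d
      + fpm i j * tHooft i a b * tHooftBar j c d
      + fmp i j * tHooftBar i a b * tHooft j c d
      + fmm i j * tHooftBar i a b * tHooftBar j c d)

def etaP : Fin 3 → Matrix (Fin 4) (Fin 4) ℝ :=
  ![!![0,0,0,1; 0,0,1,0; 0,-1,0,0; -1,0,0,0],
    !![0,0,-1,0; 0,0,0,1; 1,0,0,0; 0,-1,0,0],
    !![0,1,0,0; -1,0,0,0; 0,0,0,1; 0,0,-1,0]]

def etaM : Fin 3 → Matrix (Fin 4) (Fin 4) ℝ :=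
  ![!![0,0,0,-1; 0,0,1,0; 0,-1,0,0; 1,0,0,0],
    !![0,0,-1,0; 0,0,0,-1; 1,0,0,0; 0,1,0,0],
    !![0,1,0,0; -1,0,0,0; 0,0,0,-1; 0,0,1,0]]

lemma tHooft_eq (i : Fin 3) (a b : Fin 4) : tHooft i a b = etaP i a b := by
  fin_cases i <;> fin_cases a <;> fin_cases b <;> norm_num [tHooft, eps3, etaP]

lemma tHooftBar_eq (i : Fin 3) (a b : Fin 4) : tHooftBar i a b = etaM i a b := by
  fin_cases i <;> fin_cases a <;> fin_cases b <;> norm_num [tHooftBar, eps3, etaM]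

set_option maxHeartbeats 2000000 in
/-- The Ricci contraction of the curvature-type tensor, assuming f₊₊, f₋₋ symmetric and
f₊₋ = f₋₊ᵀ. -/
theorem ricci_contraction (fpp fpm fmp fmm : Matrix (Fin 3) (Fin 3) ℝ)
    (hpp : fpp.IsSymm) (hmm : fmm.IsSymm) (hpm : fpm = fmpᵀ) :
    (∀ a b : Fin 4,
      ∑ c : Fin 4, Riem fpp fpm fmp fmm a c b c
        = (fpp.trace + fmm.trace) * (if a = b then 1 else 0)
          + 2 * ∑ i : Fin 3, ∑ j : Fin 3,
              fpm i j * ∑ c : Fin 4, tHooft i a c * tHooftBar j b c) ∧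
    (∑ a : Fin 4, ∑ c : Fin 4, Riem fpp fpm fmp fmm a c a c
      = 4 * (fpp.trace + fmm.trace)) :=
  by
  have e01 := hpp.apply 0 1
  have e02 := hpp.apply 0 2
  have e12 := hpp.apply 1 2
  have m01 := hmm.apply 0 1
  have m02 := hmm.apply 0 2
  have m12 := hmm.apply 1 2
  subst hpm
  constructor
  · intro a b
    fin_cases a <;> fin_cases b <;>
      · simp only [Riem, tHooft_eq, tHooftBar_eq, Fin.sum_univ_four, Fin.sum_univ_three]
        norm_num [etaP, etaM, Matrix.trace, Matrix.diag, Fin.sum_univ_three,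
          Matrix.transpose_apply, Fin.ext_iff, Matrix.cons_val_two, Matrix.cons_val_three,
          Matrix.vecHead, Matrix.vecTail]
        try linarith
  · simp only [Riem, tHooft_eq, tHooftBar_eq, Fin.sum_univ_four, Fin.sum_univ_three]
    norm_num [etaP, etaM, Matrix.trace, Matrix.diag, Fin.sum_univ_three,
      Matrix.transpose_apply, Matrix.vecHead, Matrix.vecTail, Function.comp,
      Matrix.cons_val_two, Matrix.cons_val_three]
    try ring_nf
    try linarith
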